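/- Let p ≥ 3 be a prime, ζ ≠ 1 a (p-1)-st root of unity in Z_p, and define coefficients a_{m,k} by a_{0,0} = ζ/(1-ζ), a_{0,k} = p^k/(1-ζ)^{k+1} for k ≥ 1, and for m ≥ 1: a_{m,0} ∈ p^m Z_p and a_{m,k} = -(1/k) ∑_{j=0}^{k-1} (-p/ζ)^{k-j} a_{m-1,j} for k ≥ 1. Then for all m ≥ 0: v_p(a_{m,0}) ≥ m, and v_p(a_{m,k}) ≥ k - m⌊log_p(k)⌋ for all k ≥ 1. -/

import Mathlib

/-- valuation bounds `v_p(a_{m,0}) ≥ m` and `v_p(a_{m,k}) ≥ k - m⌊log_p k⌋`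
for the coefficients of the polylogarithm series `Li_m(ζ + pt) = ∑ a_{m,k} t^k`. -/
theorem stmt5 (p : ℕ) [Fact p.Prime] (hp : 3 ≤ p) (ζ : ℤ_[p])
    (hζ : ζ ^ (p - 1) = 1) (hζ1 : ζ ≠ 1)
    (a : ℕ → ℕ → ℚ_[p])
    (h00 : a 0 0 = (ζ : ℚ_[p]) / (1 - (ζ : ℚ_[p])))
    (h0k : ∀ k, 1 ≤ k → a 0 k = (p : ℚ_[p]) ^ k / (1 - (ζ : ℚ_[p])) ^ (k + 1))
    (hm0 : ∀ m, 1 ≤ m → ‖a m 0‖ ≤ (p : ℝ) ^ (-(m : ℤ)))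
    (hmk : ∀ m k, 1 ≤ m → 1 ≤ k → a m k =
      -(1 / (k : ℚ_[p])) * ∑ j ∈ Finset.range k,
        (-(p : ℚ_[p]) / (ζ : ℚ_[p])) ^ (k - j) * a (m - 1) j) :
    ∀ m : ℕ, ‖a m 0‖ ≤ (p : ℝ) ^ (-(m : ℤ)) ∧
      ∀ k, 1 ≤ k → ‖a m k‖ ≤ (p : ℝ) ^ (-((k : ℤ) - m * Nat.log p k)) := by
  have hprime : p.Prime := Fact.out
  have hp1 : (1:ℝ) < p := by exact_mod_cast hprime.one_lt
  have hp0 : (0:ℝ) < p := lt_trans one_pos hp1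
  have hpne : (p:ℝ) ≠ 0 := ne_of_gt hp0
  -- ‖ζ‖ = 1
  have hζnorm : ‖ζ‖ = 1 := by
    by_contra h
    have hlt : ‖ζ‖ < 1 := lt_of_le_of_ne ζ.norm_le_one h
    have hne : p - 1 ≠ 0 := by omega
    have : ‖ζ ^ (p-1)‖ < 1 := by
      rw [norm_pow]
      exact pow_lt_one₀ (norm_nonneg ζ) hlt hne
    rw [hζ, norm_one] at this
    exact lt_irrefl 1 this
  -- ‖1 - ζ‖ = 1
  have hsub : ‖(1 : ℤ_[p]) - ζ‖ = 1 := by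
    rcases lt_or_eq_of_le ((1 - ζ).norm_le_one) with h | h
    · exfalso
      -- then p ∣ 1 - ζ, so toZMod ζ = 1
      have hdvd : (p : ℤ_[p]) ∣ (1 - ζ) := (PadicInt.norm_lt_one_iff_dvd _).mp h
      have htz : PadicInt.toZMod (1 - ζ) = 0 := by
        have : (1 - ζ) ∈ RingHom.ker (PadicInt.toZMod : ℤ_[p] →+* ZMod p) := by
          rw [PadicInt.ker_toZMod, PadicInt.maximalIdeal_eq_span_p, Ideal.mem_span_singleton]
          exact hdvd
        rwa [RingHom.mem_ker] at this
      have hζbar : PadicInt.toZMod ζ = 1 := by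
        have := htz
        rw [map_sub, map_one, sub_eq_zero] at this
        exact this.symm
      -- geometric sum is zero
      have hS : (∑ i ∈ Finset.range (p-1), ζ ^ i) = 0 := by
        have hgm : (∑ i ∈ Finset.range (p-1), ζ ^ i) * (ζ - 1) = ζ ^ (p-1) - 1 :=
          geom_sum_mul ζ (p-1)
        rw [hζ, sub_self] at hgm
        rcases mul_eq_zero.mp hgm with h' | h'
        · exact h'
        · exact absurd (sub_eq_zero.mp h') hζ1
      have hz : ((p - 1 : ℕ) : ZMod p) = 0 := by
        have h2 := congrArg PadicInt.toZMod hS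
        rw [map_sum, map_zero] at h2
        simp only [map_pow, hζbar, one_pow] at h2
        simpa using h2
      have hcast : ((p - 1 : ℕ) : ZMod p) = -1 := by
        have : ((p : ℕ) : ZMod p) = 0 := ZMod.natCast_self p
        push_cast [Nat.cast_sub (by omega : 1 ≤ p)]
        rw [this]; ring
      rw [hcast] at hz
      haveI : NeZero p := ⟨by omega⟩
      exact one_ne_zero (neg_eq_zero.mp hz)
    · exact h
  -- norms in ℚ_[p]
  have hζQ : ‖(ζ : ℚ_[p])‖ = 1 := by rw [← PadicInt.norm_def]; exact hζnorm
  have hζQne : (ζ : ℚ_[p]) ≠ 0 := by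
    intro h; rw [h, norm_zero] at hζQ; exact zero_ne_one hζQ
  have hsubQ : ‖1 - (ζ : ℚ_[p])‖ = 1 := by
    have : ((1 - ζ : ℤ_[p]) : ℚ_[p]) = 1 - (ζ : ℚ_[p]) := by push_cast; ring
    rw [← this, ← PadicInt.norm_def]; exact hsub
  have hnormp : ‖(p : ℚ_[p])‖ = (p:ℝ)⁻¹ := Padic.norm_p
  -- norm of the ratio -p/ζ
  have hratio : ‖-(p : ℚ_[p]) / (ζ : ℚ_[p])‖ = (p:ℝ)⁻¹ := by
    rw [norm_div, norm_neg, hnormp, hζQ, div_one]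
  intro m
  induction m with
  | zero =>
    constructor
    · rw [h00, norm_div, hζQ, hsubQ]
      simp
    · intro k hk
      rw [h0k k hk, norm_div, norm_pow, norm_pow, hnormp, hsubQ, one_pow, div_one]
      have : ((p:ℝ)⁻¹) ^ k = (p:ℝ) ^ (-(k:ℤ)) := by
        rw [inv_pow, ← zpow_natCast, ← zpow_neg]
      rw [this]
      apply zpow_le_zpow_right₀ (le_of_lt hp1)
      simp
  | succ m ih =>
    have hm1 : 1 ≤ m + 1 := by omega
    refine ⟨hm0 (m+1) hm1, ?_⟩
    intro k hk
    rw [hmk (m+1) k hm1 hk]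
    simp only [Nat.add_sub_cancel]
    rw [norm_mul, norm_neg, norm_div, norm_one, one_div]
    have hkQ : ((k:ℚ_[p])) ≠ 0 := by
      exact_mod_cast Nat.cast_ne_zero.mpr (by omega : k ≠ 0)
    set v : ℕ := padicValNat p k with hv
    set L : ℕ := Nat.log p k with hL
    have hnormk : ‖(k : ℚ_[p])‖ = (p:ℝ) ^ (-(v:ℤ)) := by
      rw [Padic.norm_eq_zpow_neg_valuation hkQ, Padic.valuation_natCast]
    have hvL : v ≤ L := padicValNat_le_nat_log k
    -- bound for the sum
    have hsumbound : ‖∑ j ∈ Finset.range k,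
        (-(p : ℚ_[p]) / (ζ : ℚ_[p])) ^ (k - j) * a m j‖ ≤
        (p:ℝ) ^ (-((k : ℤ) - (m+1) * L) - v) := by
      apply IsUltrametricDist.norm_sum_le_of_forall_le_of_nonneg
        (le_of_lt (zpow_pos hp0 _))
      intro j hj
      rw [Finset.mem_range] at hj
      rw [norm_mul, norm_pow, hratio]
      have hpow : ((p:ℝ)⁻¹) ^ (k - j) = (p:ℝ) ^ (-((k:ℤ) - j)) := by
        rw [inv_pow, ← zpow_natCast, ← zpow_neg]
        congr 1
        omega
      rw [hpow]
      rcases Nat.eq_zero_or_pos j with hj0 | hjpos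
      · subst hj0
        calc (p:ℝ) ^ (-((k:ℤ) - 0)) * ‖a m 0‖
            ≤ (p:ℝ) ^ (-((k:ℤ) - 0)) * (p:ℝ) ^ (-(m:ℤ)) := by
              apply mul_le_mul_of_nonneg_left (ih.1) (le_of_lt (zpow_pos hp0 _))
          _ = (p:ℝ) ^ (-((k:ℤ) - 0) + -(m:ℤ)) := by rw [← zpow_add₀ hpne]
          _ ≤ (p:ℝ) ^ (-((k : ℤ) - (m+1) * L) - v) := by
              apply zpow_le_zpow_right₀ (le_of_lt hp1)
              have h1 : (v:ℤ) ≤ L := by exact_mod_cast hvL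
              have h2 : (L:ℤ) ≤ (m+1) * L := by
                have : (1:ℤ) * L ≤ (m+1) * L := by
                  apply mul_le_mul_of_nonneg_right _ (by positivity)
                  omega
                linarith
              linarith
      · have hjk : j ≤ k := le_of_lt hj
        have hLj : Nat.log p j ≤ L := Nat.log_mono_right hjk
        calc (p:ℝ) ^ (-((k:ℤ) - j)) * ‖a m j‖
            ≤ (p:ℝ) ^ (-((k:ℤ) - j)) * (p:ℝ) ^ (-((j : ℤ) - m * Nat.log p j)) := by
              apply mul_le_mul_of_nonneg_left (ih.2 j hjpos) (le_of_lt (zpow_pos hp0 _))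
          _ = (p:ℝ) ^ (-((k:ℤ) - j) + -((j : ℤ) - m * Nat.log p j)) := by
              rw [← zpow_add₀ hpne]
          _ ≤ (p:ℝ) ^ (-((k : ℤ) - (m+1) * L) - v) := by
              apply zpow_le_zpow_right₀ (le_of_lt hp1)
              have h1 : (v:ℤ) ≤ L := by exact_mod_cast hvL
              have h2 : (m:ℤ) * Nat.log p j ≤ m * L := by
                apply mul_le_mul_of_nonneg_left _ (by positivity)
                exact_mod_cast hLj
              have : ((m:ℤ)+1) * L = m * L + L := by ring
              linarith
    calc ‖(k:ℚ_[p])‖⁻¹ * ‖∑ j ∈ Finset.range k,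
            (-(p : ℚ_[p]) / (ζ : ℚ_[p])) ^ (k - j) * a m j‖
        ≤ ‖(k:ℚ_[p])‖⁻¹ * ((p:ℝ) ^ (-((k : ℤ) - (m+1) * L) - v)) := by
          apply mul_le_mul_of_nonneg_left hsumbound
          positivity
      _ = (p:ℝ) ^ ((v:ℤ)) * (p:ℝ) ^ (-((k : ℤ) - (m+1) * L) - v) := by
          rw [hnormk, ← zpow_neg, neg_neg]
      _ = (p:ℝ) ^ (-((k : ℤ) - (↑(m+1)) * L)) := by
          rw [← zpow_add₀ hpne]
          congr 1
          push_cast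
          ring
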